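/- arXiv:2501.08656 — 2 statements merged into one kernel-verified Lean document; each statement's English description precedes it below -/
import Mathlib

section
/- Let (M,d) be a finite metric space with N+1 points. A basis (b_n)_{n=1}^N of F(M) is stochastic if and only if there exist nonzero reals (ρ_n)_{n=1}^N, an order F ∈ Σ(M), and reals λ_{n,i} ∈ [0,1] for 0 ≤ i < n ≤ N with Σ_{i=0}^{n-1} λ_{n,i} = 1 for every n, such that b_n = ρ_n( δ_{F(n)} − Σ_{i<n} λ_{n,i} δ_{F(i)} ) for n = 1,…,N. In that case, for every n, ‖b_n‖ = |ρ_n| Σ_{i<n} λ_{n,i} d(F(n),F(i)). -/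
open Finset

noncomputable section
open scoped Classical

namespace TCS

/-- The indicator function of a point. -/
def indic {V : Type*} [DecidableEq V] (x : V) : V → ℝ := fun z => if z = x then 1 else 0

/-- The molecule `δ_x - δ_y`. -/
def mol {V : Type*} [DecidableEq V] (x y : V) : V → ℝ := fun z => indic x z - indic y z

/-- `d` is a metric on `V`. -/
def IsMetric {V : Type*} (d : V → V → ℝ) : Prop :=
  (∀ x y, d x y = d y x) ∧ (∀ x y, d x y = 0 ↔ x = y) ∧ ∀ x y z, d x z ≤ d x y + d y z

/-- The transportation cost norm of `μ` (an element of the free space over `(V, d)`,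
i.e. a function with total sum zero), defined by duality with `Lip_0`. -/
def tcNorm {V : Type*} [Fintype V] (d : V → V → ℝ) (x0 : V) (μ : V → ℝ) : ℝ :=
  sSup {c : ℝ | ∃ f : V → ℝ, f x0 = 0 ∧ (∀ x y, |f x - f y| ≤ d x y) ∧ c = ∑ x, μ x * f x}

/-- `(b, bstar)` is a basis of the free space over `Fin (N+1)` (with basepoint `0`),
indexed by `n ≠ 0`, together with its coordinate functionals. -/
def IsFreeBasis (N : ℕ) (b : Fin (N+1) → Fin (N+1) → ℝ)
    (bstar : Fin (N+1) → (Fin (N+1) → ℝ) → ℝ) : Prop :=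
  (∀ n : Fin (N+1), n ≠ 0 → ∑ x, b n x = 0) ∧
  (∀ μ : Fin (N+1) → ℝ, (∑ x, μ x = 0) → ∀ z,
      μ z = ∑ n ∈ univ.filter (· ≠ (0 : Fin (N+1))), bstar n μ * b n z) ∧
  (∀ n m : Fin (N+1), n ≠ 0 → m ≠ 0 → bstar n (b m) = if n = m then 1 else 0) ∧
  (∀ n (c : ℝ) (μ ν : Fin (N+1) → ℝ), bstar n (c • μ + ν) = c * bstar n μ + bstar n ν)

/-- Every canonical projection of the (ordered) basis `(b, bstar)` is a stochastic
retraction. -/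
def IsStochProj (N : ℕ) (b : Fin (N+1) → Fin (N+1) → ℝ)
    (bstar : Fin (N+1) → (Fin (N+1) → ℝ) → ℝ) : Prop :=
  ∀ n : Fin (N+1),
    ∃ S : Finset (Fin (N+1)), (0 : Fin (N+1)) ∈ S ∧
      ∃ R : Fin (N+1) → Fin (N+1) → ℝ,
        (∀ x, (∀ z, 0 ≤ R x z) ∧ (∀ z, z ∉ S → R x z = 0) ∧ ∑ z, R x z = 1) ∧
        (∀ x ∈ S, R x = indic x) ∧
        (∀ μ : Fin (N+1) → ℝ, (∑ x, μ x = 0) → ∀ z,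
          (∑ i ∈ univ.filter (fun i => i ≠ (0 : Fin (N+1)) ∧ i ≤ n), bstar i μ * b i z)
            = ∑ x, μ x * R x z)

/-- The `ℓ₁`-distortion of the basis `(b, bstar)`. -/
def d1Basis {N : ℕ} (d : Fin (N+1) → Fin (N+1) → ℝ) (b : Fin (N+1) → Fin (N+1) → ℝ)
    (bstar : Fin (N+1) → (Fin (N+1) → ℝ) → ℝ) : ℝ :=
  sSup {c : ℝ | ∃ μ : Fin (N+1) → ℝ, (∑ x, μ x = 0) ∧ tcNorm d 0 μ = 1 ∧
    c = ∑ n ∈ univ.filter (· ≠ (0 : Fin (N+1))), |bstar n μ| * tcNorm d 0 (b n)}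

/-- The `ℓ₁ᴺ`-distortion of the metric space `(Fin (N+1), d)`. -/
def d1Space {N : ℕ} (d : Fin (N+1) → Fin (N+1) → ℝ) : ℝ :=
  sInf {c : ℝ | ∃ b bstar, IsFreeBasis N b bstar ∧ c = d1Basis d b bstar}

/-- The stochastic `ℓ₁ᴺ`-distortion of the metric space `(Fin (N+1), d)`. -/
def sd1Space {N : ℕ} (d : Fin (N+1) → Fin (N+1) → ℝ) : ℝ :=
  sInf {c : ℝ | ∃ b bstar, IsFreeBasis N b bstar ∧ IsStochProj N b bstar ∧
      c = d1Basis d b bstar}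

/-- The data `(λ_{n,i})` of a normalised stochastic basis. -/
def LamData (N : ℕ) (lam : Fin (N+1) → Fin (N+1) → ℝ) : Prop :=
  (∀ n i, 0 ≤ lam n i ∧ lam n i ≤ 1) ∧
  (∀ n i : Fin (N+1), ¬ i < n → lam n i = 0) ∧
  (∀ n : Fin (N+1), n ≠ 0 → ∑ i, lam n i = 1)

/-- The normalised stochastic basis with data `F`, `(λ_{n,i})`:
`b n = δ_{F n} - ∑_{i<n} λ_{n,i} δ_{F i}`. -/
def normBasisF {N : ℕ} (F : Equiv.Perm (Fin (N+1))) (lam : Fin (N+1) → Fin (N+1) → ℝ)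
    (n : Fin (N+1)) : Fin (N+1) → ℝ :=
  fun z => indic (F n) z - ∑ i, lam n i * indic (F i) z

/-- The normalised stochastic basis after identifying `M` with `{0, …, N}` via `F`. -/
def normBasis {N : ℕ} (lam : Fin (N+1) → Fin (N+1) → ℝ) : Fin (N+1) → Fin (N+1) → ℝ :=
  normBasisF (Equiv.refl _) lam

/-- `bstar` is the family of coordinate functionals of the normalised
stochastic basis with data `F`, `(λ_{n,i})`. -/
def IsCoordF {N : ℕ} (F : Equiv.Perm (Fin (N+1))) (lam : Fin (N+1) → Fin (N+1) → ℝ)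
    (bstar : Fin (N+1) → (Fin (N+1) → ℝ) → ℝ) : Prop :=
  ∀ μ : Fin (N+1) → ℝ, (∑ x, μ x = 0) → ∀ z,
    μ z = ∑ n ∈ univ.filter (· ≠ (0 : Fin (N+1))), bstar n μ * normBasisF F lam n z

/-- The auxiliary function `α(μ)` defined by downwards recursion:
`α(μ)(n) = μ n + ∑_{m > n} α(μ)(m) λ_{m,n}`. -/
def alpha {N : ℕ} (lam : Fin (N+1) → Fin (N+1) → ℝ) (μ : Fin (N+1) → ℝ)
    (n : Fin (N+1)) : ℝ :=
  μ n + ∑ m ∈ (Finset.univ.filter (fun m : Fin (N+1) => n < m)).attach,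
      alpha lam μ m.1 * lam m.1 n
termination_by (N + 1) - n.val
decreasing_by
  have hm := m.2
  simp only [Finset.mem_filter, Finset.mem_univ, true_and] at hm
  have h1 : n.val < m.1.val := hm
  have h2 := m.1.isLt
  omega

/-- Trees on `{0,…,N}` compatible with the order: given by a parent map with
`par n < n` for `n ≠ 0`. -/
def Tr (N : ℕ) : Type :=
  {par : Fin (N+1) → Fin (N+1) // par 0 = 0 ∧ ∀ n, n ≠ 0 → par n < n}

instance (N : ℕ) : Finite (Tr N) :=
  inferInstanceAs (Finite {par : Fin (N+1) → Fin (N+1) // par 0 = 0 ∧ ∀ n, n ≠ 0 → par n < n})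

noncomputable instance (N : ℕ) : Fintype (Tr N) := Fintype.ofFinite _

/-- `a` lies on the tree path from `x` to the root `0`. -/
def Anc {N : ℕ} (T : Tr N) (x a : Fin (N+1)) : Prop :=
  Relation.ReflTransGen (fun u v => v = T.1 u ∧ u ≠ 0) x a

/-- The meeting point `m_T(x,y)`: the minimal vertex of the tree path `[x,y]_T`,
equivalently the nearest common ancestor. -/
noncomputable def meet {N : ℕ} (T : Tr N) (x y : Fin (N+1)) : Fin (N+1) :=
  ((Finset.univ.filter (fun a => Anc T x a ∧ Anc T y a)).max).unbotD 0

/-- `p` is a probability distribution on `Tr N`. -/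
def IsProb {N : ℕ} (p : Tr N → ℝ) : Prop := (∀ T, 0 ≤ p T) ∧ ∑ T, p T = 1

/-- Probability of an event. -/
def probOf {N : ℕ} (p : Tr N → ℝ) (P : Tr N → Prop) : ℝ :=
  ∑ T ∈ Finset.univ.filter P, p T

/-- Expectation. -/
def expval {N : ℕ} (p : Tr N → ℝ) (f : Tr N → ℝ) : ℝ := ∑ T, p T * f T

/-- The geodesic distance `d_T(x,y)` of the weighted tree `T` (edge `{n, par n}`
carrying weight `d n (par n)`). -/
noncomputable def treeDist {N : ℕ} (d : Fin (N+1) → Fin (N+1) → ℝ) (T : Tr N)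
    (x y : Fin (N+1)) : ℝ :=
  ∑ s ∈ Finset.univ.filter (fun s =>
      (Anc T x s ∨ Anc T y s) ∧ Anc T s (meet T x y) ∧ s ≠ meet T x y),
    d s (T.1 s)

/-- `s` lies on the half-open segment `[z, m)_T`. -/
def onHalfSeg {N : ℕ} (T : Tr N) (z m s : Fin (N+1)) : Prop :=
  Anc T z s ∧ Anc T s m ∧ s ≠ m

/-- `p` is `(x,y)`-independent. -/
def XYIndep {N : ℕ} (p : Tr N → ℝ) (x y : Fin (N+1)) : Prop :=
  ∀ z : Fin (N+1), (z = x ∨ z = y) → ∀ s t : Fin (N+1), t < s →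
    probOf p (fun T => T.1 s = t ∧ onHalfSeg T z (meet T x y) s)
      = probOf p (fun T => T.1 s = t) * probOf p (fun T => onHalfSeg T z (meet T x y) s)

/-- `p0` and `p` are compatible: every vertex pair has the same probability of
being an edge of the random tree. -/
def Compat {N : ℕ} (p0 p : Tr N → ℝ) : Prop :=
  ∀ s t : Fin (N+1), t < s →
    probOf p0 (fun T => T.1 s = t) = probOf p (fun T => T.1 s = t)

/-- The product probability `π_{(b_n)}` determined by the data `(λ_{n,i})`. -/
def prodProb {N : ℕ} (lam : Fin (N+1) → Fin (N+1) → ℝ) (T : Tr N) : ℝ :=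
  ∏ n ∈ Finset.univ.filter (fun n : Fin (N+1) => n ≠ 0), lam n (T.1 n)

/-- The (strictly decreasing) chain with vertex set `S` is a subgraph of `T`:
consecutive elements of `S` are linked by the parent map. -/
def chainInTree {N : ℕ} (S : Finset (Fin (N+1))) (T : Tr N) : Prop :=
  ∀ a ∈ S, (∃ c ∈ S, c < a) → T.1 a ∈ S ∧ ∀ c ∈ S, c < a → c ≤ T.1 a

end TCS


namespace TCS

/-- Auxiliary lemmas (added for the proof of statement2). -/

lemma indic_sum {N : ℕ} (a : Fin (N+1)) : ∑ x, indic a x = 1 := by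
  simp [indic]

lemma sum_indic_mul {N : ℕ} (a : Fin (N+1)) (f : Fin (N+1) → ℝ) :
    ∑ x, indic a x * f x = f a := by
  simp [indic, ite_mul]

lemma sum_mul_indic {N : ℕ} (a : Fin (N+1)) (f : Fin (N+1) → ℝ) :
    ∑ x, f x * indic a x = f a := by
  simp [indic, mul_ite]

lemma mol_sum {N : ℕ} (x y : Fin (N+1)) : ∑ z, mol x y z = 0 := by
  simp [mol, Finset.sum_sub_distrib, indic_sum]

lemma mol_decomp {N : ℕ} (μ : Fin (N+1) → ℝ) (hμ : ∑ x, μ x = 0) (z : Fin (N+1)) :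
    ∑ x, μ x * mol x 0 z = μ z := by
  simp only [mol, mul_sub, Finset.sum_sub_distrib]
  have h1 : ∑ x, μ x * indic x z = μ z := by
    simp [indic, mul_ite]
  have h2 : ∑ x : Fin (N+1), μ x * indic 0 z = 0 := by
    rw [← Finset.sum_mul, hμ, zero_mul]
  rw [h1, h2, sub_zero]

lemma bs_zero {N : ℕ} (bs : (Fin (N+1) → ℝ) → ℝ)
    (hlin : ∀ (c : ℝ) (μ ν : Fin (N+1) → ℝ), bs (c • μ + ν) = c * bs μ + bs ν) :
    bs 0 = 0 := by
  have h := hlin 1 0 0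
  simpa using h

lemma bs_smul {N : ℕ} (bs : (Fin (N+1) → ℝ) → ℝ)
    (hlin : ∀ (c : ℝ) (μ ν : Fin (N+1) → ℝ), bs (c • μ + ν) = c * bs μ + bs ν)
    (c : ℝ) (μ : Fin (N+1) → ℝ) : bs (c • μ) = c * bs μ := by
  have h := hlin c μ 0
  simpa [bs_zero bs hlin] using h

lemma bs_sum {N : ℕ} (bs : (Fin (N+1) → ℝ) → ℝ)
    (hlin : ∀ (c : ℝ) (μ ν : Fin (N+1) → ℝ), bs (c • μ + ν) = c * bs μ + bs ν)
    {ι : Type*} (s : Finset ι) (g : ι → Fin (N+1) → ℝ) :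
    bs (∑ i ∈ s, g i) = ∑ i ∈ s, bs (g i) := by
  classical
  induction s using Finset.induction_on with
  | empty => simpa using bs_zero bs hlin
  | insert a s hx ih =>
      rw [Finset.sum_insert hx, Finset.sum_insert hx, ← ih]
      have h := hlin 1 (g a) (∑ i ∈ s, g i)
      simpa using h

lemma bs_eval {N : ℕ} (bs : (Fin (N+1) → ℝ) → ℝ)
    (hlin : ∀ (c : ℝ) (μ ν : Fin (N+1) → ℝ), bs (c • μ + ν) = c * bs μ + bs ν)
    (μ : Fin (N+1) → ℝ) (hμ : ∑ x, μ x = 0) :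
    bs μ = ∑ x, μ x * bs (mol x 0) := by
  have hrep : μ = ∑ x : Fin (N+1), μ x • mol x 0 := by
    funext z
    rw [Finset.sum_apply]
    simp only [Pi.smul_apply, smul_eq_mul]
    exact (mol_decomp μ hμ z).symm
  calc bs μ = bs (∑ x : Fin (N+1), μ x • mol x 0) := by rw [← hrep]
    _ = ∑ x : Fin (N+1), bs (μ x • mol x 0) := bs_sum bs hlin _ _
    _ = ∑ x, μ x * bs (mol x 0) := by
        refine Finset.sum_congr rfl fun x _ => bs_smul bs hlin _ _

lemma dist_nonneg' {N : ℕ} (d : Fin (N+1) → Fin (N+1) → ℝ) (hd : IsMetric d)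
    (x y : Fin (N+1)) : 0 ≤ d x y := by
  obtain ⟨hsymm, hzero, htri⟩ := hd
  have h := htri x y x
  have h0 : d x x = 0 := (hzero x x).2 rfl
  have h2 := hsymm x y
  linarith [htri x y x]

lemma tcNorm_form {N : ℕ} (d : Fin (N+1) → Fin (N+1) → ℝ) (hd : IsMetric d)
    (ρ : ℝ) (p : Fin (N+1) → Fin (N+1)) (n : Fin (N+1)) (w : Fin (N+1) → ℝ)
    (hw0 : ∀ i, 0 ≤ w i) (hw1 : ∑ i, w i = 1) :
    tcNorm d 0 (fun z => ρ * (indic (p n) z - ∑ i, w i * indic (p i) z))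
      = |ρ| * ∑ i, w i * d (p n) (p i) := by
  obtain ⟨hsymm, hzero, htri⟩ := hd
  have hdnn : ∀ x y, 0 ≤ d x y := dist_nonneg' d ⟨hsymm, hzero, htri⟩
  set μ : Fin (N+1) → ℝ := fun z => ρ * (indic (p n) z - ∑ i, w i * indic (p i) z)
    with hμdef
  set V : ℝ := |ρ| * ∑ i, w i * d (p n) (p i) with hVdef
  -- evaluation of the pairing
  have step : ∀ f : Fin (N+1) → ℝ,
      ∑ x, μ x * f x = ρ * ∑ i, w i * (f (p n) - f (p i)) := by
    intro f
    have e1 : ∑ x, μ x * f x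
        = ρ * (∑ x, indic (p n) x * f x - ∑ i, w i * ∑ x, indic (p i) x * f x) := by
      have hx : ∀ x, μ x * f x = ρ * (indic (p n) x * f x)
          - ∑ i, ρ * (w i * (indic (p i) x * f x)) := by
        intro x
        rw [hμdef]
        simp only []
        rw [show ρ * (indic (p n) x - ∑ i, w i * indic (p i) x) * f x
            = ρ * (indic (p n) x * f x)
              - (∑ i, w i * indic (p i) x) * (ρ * f x) from by ring, Finset.sum_mul]
        congr 1
        exact Finset.sum_congr rfl fun i _ => by ring
      simp only [hx]
      rw [Finset.sum_sub_distrib, Finset.sum_comm, mul_sub, Finset.mul_sum, Finset.mul_sum]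
      congr 1
      refine Finset.sum_congr rfl fun i _ => ?_
      simp only [Finset.mul_sum]
    rw [e1, sum_indic_mul]
    have e2 : ∀ i, ∑ x, indic (p i) x * f x = f (p i) := fun i => sum_indic_mul _ _
    simp only [e2]
    have e3 : f (p n) = ∑ i, w i * f (p n) := by
      rw [← Finset.sum_mul, hw1, one_mul]
    calc ρ * (f (p n) - ∑ i, w i * f (p i))
        = ρ * (∑ i, w i * f (p n) - ∑ i, w i * f (p i)) := by rw [← e3]
      _ = ρ * ∑ i, w i * (f (p n) - f (p i)) := by
          rw [← Finset.sum_sub_distrib]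
          congr 1
          exact Finset.sum_congr rfl fun i _ => by ring
  -- upper bound for all admissible f
  have hub : ∀ c ∈ {c : ℝ | ∃ f : Fin (N+1) → ℝ, f 0 = 0 ∧
      (∀ x y, |f x - f y| ≤ d x y) ∧ c = ∑ x, μ x * f x}, c ≤ V := by
    rintro c ⟨f, hf0, hflip, rfl⟩
    rw [step f]
    have habs : |∑ i, w i * (f (p n) - f (p i))| ≤ ∑ i, w i * d (p n) (p i) := by
      refine (Finset.abs_sum_le_sum_abs _ _).trans ?_
      refine Finset.sum_le_sum fun i _ => ?_
      rw [abs_mul, abs_of_nonneg (hw0 i)]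
      exact mul_le_mul_of_nonneg_left (hflip _ _) (hw0 i)
    calc ρ * ∑ i, w i * (f (p n) - f (p i))
        ≤ |ρ * ∑ i, w i * (f (p n) - f (p i))| := le_abs_self _
      _ = |ρ| * |∑ i, w i * (f (p n) - f (p i))| := abs_mul _ _
      _ ≤ |ρ| * ∑ i, w i * d (p n) (p i) :=
          mul_le_mul_of_nonneg_left habs (abs_nonneg ρ)
  -- the optimal f
  have hmem : V ∈ {c : ℝ | ∃ f : Fin (N+1) → ℝ, f 0 = 0 ∧
      (∀ x y, |f x - f y| ≤ d x y) ∧ c = ∑ x, μ x * f x} := by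
    set s : ℝ := if 0 ≤ ρ then (-1 : ℝ) else 1 with hsdef
    have hs1 : |s| = 1 := by
      rw [hsdef]; split <;> simp
    refine ⟨fun x => s * (d (p n) x - d (p n) 0), by simp, fun x y => ?_, ?_⟩
    · have h1 : d (p n) x ≤ d (p n) y + d y x := htri _ _ _
      have h2 : d (p n) y ≤ d (p n) x + d x y := htri _ _ _
      have h3 : d y x = d x y := hsymm _ _
      rw [show s * (d (p n) x - d (p n) 0) - s * (d (p n) y - d (p n) 0)
          = s * (d (p n) x - d (p n) y) from by ring, abs_mul, hs1, one_mul]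
      rw [abs_sub_le_iff]
      constructor <;> linarith
    · rw [step]
      have e4 : ∀ i, s * (d (p n) (p n) - d (p n) 0) - s * (d (p n) (p i) - d (p n) 0)
          = -s * d (p n) (p i) := by
        intro i
        have : d (p n) (p n) = 0 := (hzero _ _).2 rfl
        rw [this]; ring
      simp only [e4]
      have e5 : ρ * -s = |ρ| := by
        rw [hsdef]; split
        · rename_i h; rw [abs_of_nonneg h]; ring
        · rename_i h; rw [abs_of_neg (lt_of_not_ge h)]; ring
      rw [hVdef]
      rw [show ∑ i, w i * (-s * d (p n) (p i)) = -s * ∑ i, w i * d (p n) (p i) from by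
        rw [Finset.mul_sum]; exact Finset.sum_congr rfl fun i _ => by ring]
      rw [← mul_assoc, e5]
  -- conclude
  rw [tcNorm]
  exact le_antisymm (csSup_le ⟨V, hmem⟩ hub) (le_csSup ⟨V, hub⟩ hmem)

/-- Random-walk retraction kernel (in index space) used to realise the canonical
projections of a normalised stochastic basis as stochastic retractions. -/
def Qfun {N : ℕ} (lam : Fin (N+1) → Fin (N+1) → ℝ) (n : Fin (N+1)) (m : Fin (N+1)) :
    Fin (N+1) → ℝ :=
  if m ≤ n then indic m
  else fun z => ∑ i ∈ (univ.filter (fun i : Fin (N+1) => i < m)).attach,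
      lam m i.1 * Qfun lam n i.1 z
termination_by m.val
decreasing_by
  have hh := i.2
  simp only [Finset.mem_filter, Finset.mem_univ, true_and] at hh
  exact hh

lemma Qfun_le {N : ℕ} (lam : Fin (N+1) → Fin (N+1) → ℝ) {n m : Fin (N+1)} (h : m ≤ n) :
    Qfun lam n m = indic m := by
  rw [Qfun, if_pos h]

lemma Qfun_gt' {N : ℕ} (lam : Fin (N+1) → Fin (N+1) → ℝ) (hlam : LamData N lam)
    {n m : Fin (N+1)} (h : ¬ m ≤ n) (z : Fin (N+1)) :
    Qfun lam n m z = ∑ i, lam m i * Qfun lam n i z := by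
  rw [Qfun, if_neg h]
  rw [Finset.sum_attach (univ.filter (fun i : Fin (N+1) => i < m))
    (fun i => lam m i * Qfun lam n i z)]
  refine Finset.sum_subset (Finset.subset_univ _) fun i _ hi => ?_
  simp only [Finset.mem_filter, Finset.mem_univ, true_and] at hi
  rw [hlam.2.1 m i hi, zero_mul]

lemma Qfun_prob {N : ℕ} (lam : Fin (N+1) → Fin (N+1) → ℝ) (hlam : LamData N lam)
    (n m : Fin (N+1)) :
    (∀ z, 0 ≤ Qfun lam n m z) ∧ (∀ z, ¬ z ≤ n → Qfun lam n m z = 0) ∧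
      (∑ z, Qfun lam n m z = 1) := by
  have ih : ∀ i : Fin (N+1), i < m →
      (∀ z, 0 ≤ Qfun lam n i z) ∧ (∀ z, ¬ z ≤ n → Qfun lam n i z = 0) ∧
        (∑ z, Qfun lam n i z = 1) := fun i hi => Qfun_prob lam hlam n i
  · by_cases h : m ≤ n
    · rw [Qfun_le lam h]
      refine ⟨fun z => ?_, fun z hz => ?_, indic_sum m⟩
      · dsimp [indic]; split <;> norm_num
      · have : z ≠ m := fun he => hz (he ▸ h)
        simp [indic, this]
    · have hm0 : m ≠ 0 := fun he => h (he ▸ Fin.zero_le n)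
      refine ⟨fun z => ?_, fun z hz => ?_, ?_⟩
      · rw [Qfun_gt' lam hlam h z]
        refine Finset.sum_nonneg fun i _ => ?_
        by_cases hi : i < m
        · exact mul_nonneg (hlam.1 m i).1 ((ih i hi).1 z)
        · rw [hlam.2.1 m i hi, zero_mul]
      · rw [Qfun_gt' lam hlam h z]
        refine Finset.sum_eq_zero fun i _ => ?_
        by_cases hi : i < m
        · rw [(ih i hi).2.1 z hz, mul_zero]
        · rw [hlam.2.1 m i hi, zero_mul]
      · have : ∀ z, Qfun lam n m z = ∑ i, lam m i * Qfun lam n i z :=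
          Qfun_gt' lam hlam h
        simp only [this]
        rw [Finset.sum_comm]
        have : ∀ i : Fin (N+1), ∑ z, lam m i * Qfun lam n i z = lam m i := by
          intro i
          by_cases hi : i < m
          · rw [← Finset.mul_sum, (ih i hi).2.2, mul_one]
          · rw [hlam.2.1 m i hi]
            simp
        simp only [this]
        exact hlam.2.2 m hm0
termination_by m.val
decreasing_by exact hi

lemma pair_eval {N : ℕ} (ρ : ℝ) (q : Fin (N+1) → Fin (N+1)) (m : Fin (N+1))
    (w : Fin (N+1) → ℝ) (g : Fin (N+1) → ℝ) :
    ∑ x, (ρ * (indic (q m) x - ∑ i, w i * indic (q i) x)) * g x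
      = ρ * (g (q m) - ∑ i, w i * g (q i)) := by
  have hx : ∀ x, (ρ * (indic (q m) x - ∑ i, w i * indic (q i) x)) * g x
      = ρ * (indic (q m) x * g x) - ∑ i, ρ * (w i * (indic (q i) x * g x)) := by
    intro x
    rw [show (ρ * (indic (q m) x - ∑ i, w i * indic (q i) x)) * g x
        = ρ * (indic (q m) x * g x)
          - (∑ i, w i * indic (q i) x) * (ρ * g x) from by ring, Finset.sum_mul]
    congr 1
    exact Finset.sum_congr rfl fun i _ => by ring
  simp only [hx]
  rw [Finset.sum_sub_distrib, Finset.sum_comm, ← Finset.mul_sum, sum_indic_mul, mul_sub]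
  congr 1
  rw [Finset.mul_sum]
  refine Finset.sum_congr rfl fun i _ => ?_
  rw [← Finset.mul_sum, ← Finset.mul_sum, sum_indic_mul]

lemma backward_isStochProj {N : ℕ} (b : Fin (N+1) → Fin (N+1) → ℝ)
    (bstar : Fin (N+1) → (Fin (N+1) → ℝ) → ℝ) (hbasis : IsFreeBasis N b bstar)
    (ρ : Fin (N+1) → ℝ) (F : Equiv.Perm (Fin (N+1))) (lam : Fin (N+1) → Fin (N+1) → ℝ)
    (hF0 : F 0 = 0) (hlam : LamData N lam)
    (hform : ∀ n : Fin (N+1), n ≠ 0 →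
      b n = fun z => ρ n * (indic (F n) z - ∑ i, lam n i * indic (F i) z)) :
    IsStochProj N b bstar := by
  obtain ⟨hsum, hrepr, hdual, hlin⟩ := hbasis
  intro n
  refine ⟨(univ.filter (· ≤ n)).image F, ?_,
    fun x z => Qfun lam n (F.symm x) (F.symm z), ?_, ?_, ?_⟩
  · exact Finset.mem_image.mpr ⟨0, by simp [Fin.zero_le], hF0⟩
  · intro x
    refine ⟨fun z => (Qfun_prob lam hlam n (F.symm x)).1 _, fun z hz => ?_, ?_⟩
    · apply (Qfun_prob lam hlam n (F.symm x)).2.1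
      intro hle
      exact hz (Finset.mem_image.mpr ⟨F.symm z, by simpa using hle, by simp⟩)
    · exact (Equiv.sum_comp F.symm (Qfun lam n (F.symm x))).trans
        (Qfun_prob lam hlam n (F.symm x)).2.2
  · rintro x hx
    obtain ⟨i, hi, rfl⟩ := Finset.mem_image.mp hx
    simp only [Finset.mem_filter, Finset.mem_univ, true_and] at hi
    funext z
    show Qfun lam n (F.symm (F i)) (F.symm z) = indic (F i) z
    rw [Equiv.symm_apply_apply, Qfun_le lam hi]
    simp [indic, Equiv.symm_apply_eq]
  · intro μ hμ z
    -- key pointwise evaluation for basis vectors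
    have key : ∀ m : Fin (N+1), m ≠ 0 →
        ∑ x, b m x * Qfun lam n (F.symm x) (F.symm z)
          = if m ≤ n then b m z else 0 := by
      intro m hm
      rw [hform m hm]
      simp only []
      rw [pair_eval (ρ m) F m (lam m) (fun x => Qfun lam n (F.symm x) (F.symm z))]
      simp only [Equiv.symm_apply_apply]
      by_cases hmn : m ≤ n
      · rw [if_pos hmn, Qfun_le lam hmn]
        have : ∀ i, lam m i * Qfun lam n i (F.symm z) = lam m i * indic (F i) z := by
          intro i
          by_cases hi : i < m
          · rw [Qfun_le lam (le_of_lt (lt_of_lt_of_le hi hmn))]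
            congr 1
            simp [indic, Equiv.symm_apply_eq]
          · rw [hlam.2.1 m i hi, zero_mul, zero_mul]
        simp only [this]
        have e : indic m (F.symm z) = indic (F m) z := by
          simp [indic, Equiv.symm_apply_eq]
        rw [e]
      · rw [if_neg hmn, Qfun_gt' lam hlam hmn, sub_self, mul_zero]
    -- expand `μ` through the basis and swap sums
    have expand : ∀ x, μ x = ∑ m ∈ univ.filter (· ≠ (0 : Fin (N+1))), bstar m μ * b m x :=
      hrepr μ hμ
    calc ∑ i ∈ univ.filter (fun i => i ≠ (0 : Fin (N+1)) ∧ i ≤ n), bstar i μ * b i z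
        = ∑ m ∈ univ.filter (· ≠ (0 : Fin (N+1))),
            if m ≤ n then bstar m μ * b m z else 0 := by
          rw [show (univ.filter (fun i => i ≠ (0 : Fin (N+1)) ∧ i ≤ n))
              = (univ.filter (· ≠ (0 : Fin (N+1)))).filter (· ≤ n) from by
            rw [Finset.filter_filter]]
          rw [Finset.sum_filter]
      _ = ∑ m ∈ univ.filter (· ≠ (0 : Fin (N+1))),
            bstar m μ * ∑ x, b m x * Qfun lam n (F.symm x) (F.symm z) := by
          refine Finset.sum_congr rfl fun m hm => ?_
          simp only [Finset.mem_filter, Finset.mem_univ, true_and] at hm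
          rw [key m hm]
          split <;> simp
      _ = ∑ x, μ x * Qfun lam n (F.symm x) (F.symm z) := by
          simp only [Finset.mul_sum]
          rw [Finset.sum_comm]
          refine Finset.sum_congr rfl fun x _ => ?_
          rw [expand x, Finset.sum_mul]
          exact Finset.sum_congr rfl fun m _ => by ring

lemma forward_struct {N : ℕ} (b : Fin (N+1) → Fin (N+1) → ℝ)
    (bstar : Fin (N+1) → (Fin (N+1) → ℝ) → ℝ) (hbasis : IsFreeBasis N b bstar)
    (hsp : IsStochProj N b bstar) :
    ∃ (ρ : Fin (N+1) → ℝ) (F : Equiv.Perm (Fin (N+1)))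
      (lam : Fin (N+1) → Fin (N+1) → ℝ),
      F 0 = 0 ∧ (∀ n : Fin (N+1), n ≠ 0 → ρ n ≠ 0) ∧ LamData N lam ∧
      ∀ n : Fin (N+1), n ≠ 0 →
        b n = fun z => ρ n * (indic (F n) z - ∑ i, lam n i * indic (F i) z) := by
  obtain ⟨hsum, hrepr, hdual, hlin⟩ := hbasis
  choose S hS0 R hR hfix hproj using hsp
  set c : Fin (N+1) → Fin (N+1) → ℝ := fun i x => bstar i (mol x 0) with hcdef
  set Tset : Fin (N+1) → Finset (Fin (N+1)) :=
    fun n => univ.filter (fun z => ∃ x, R n x z ≠ 0) with hTdef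
  set pred : Fin (N+1) → Fin (N+1) := fun n => ⟨n.val - 1, by omega⟩ with hpreddef
  -- basic facts about the retractions
  have hR0 : ∀ n, R n 0 = indic 0 := fun n => hfix n 0 (hS0 n)
  have hTzero : ∀ n x z, z ∉ Tset n → R n x z = 0 := by
    intro n x z hz
    rw [hTdef] at hz
    simp only [Finset.mem_filter, Finset.mem_univ, true_and, not_exists, not_not] at hz
    exact hz x
  have hfixT : ∀ n z, z ∈ Tset n → R n z = indic z := by
    intro n z hz
    rw [hTdef] at hz
    simp only [Finset.mem_filter, Finset.mem_univ, true_and] at hz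
    obtain ⟨x, hx⟩ := hz
    by_cases hzS : z ∈ S n
    · exact hfix n z hzS
    · exact absurd ((hR n x).2.1 z hzS) hx
  have h0T : ∀ n, (0 : Fin (N+1)) ∈ Tset n := by
    intro n
    rw [hTdef]
    simp only [Finset.mem_filter, Finset.mem_univ, true_and]
    exact ⟨0, by rw [hR0 n]; simp [indic]⟩
  have hRle1 : ∀ n x z, R n x z ≤ 1 := by
    intro n x z
    have h := Finset.single_le_sum (f := fun z => R n x z)
      (fun i _ => (hR n x).1 i) (Finset.mem_univ z)
    rw [(hR n x).2.2] at h
    exact h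
  -- the master identity
  have hId : ∀ n x z,
      (∑ i ∈ univ.filter (fun i => i ≠ (0 : Fin (N+1)) ∧ i ≤ n), bstar i (mol x 0) * b i z)
        = R n x z - indic 0 z := by
    intro n x z
    rw [hproj n (mol x 0) (mol_sum x 0) z]
    simp only [mol, sub_mul]
    rw [Finset.sum_sub_distrib,
      sum_indic_mul x (fun y => R n y z), sum_indic_mul 0 (fun y => R n y z)]
    rw [hR0 n]
  -- level 0 : R is trivial
  have hfilt0 : univ.filter (fun i : Fin (N+1) => i ≠ 0 ∧ i ≤ (0 : Fin (N+1))) = ∅ := by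
    ext i
    simp only [Finset.mem_filter, Finset.mem_univ, true_and, Finset.notMem_empty, iff_false]
    rintro ⟨h1, h2⟩
    exact h1 (Fin.le_zero_iff.mp h2)
  have hT0 : Tset 0 = {0} := by
    have hRz : ∀ x z, R 0 x z = indic 0 z := by
      intro x z
      have h := hId 0 x z
      rw [hfilt0, Finset.sum_empty] at h
      linarith
    ext z
    rw [hTdef]
    simp only [Finset.mem_filter, Finset.mem_univ, true_and, Finset.mem_singleton]
    constructor
    · rintro ⟨x, hx⟩
      rw [hRz x z] at hx
      by_contra hz0
      exact hx (by simp [indic, hz0])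
    · rintro rfl
      exact ⟨0, by rw [hRz 0 0]; simp [indic]⟩
  -- top level : R is the identity retraction
  have hRlast : ∀ x, R (Fin.last N) x = indic x := by
    intro x
    funext z
    have h := hId (Fin.last N) x z
    rw [show univ.filter (fun i : Fin (N+1) => i ≠ 0 ∧ i ≤ Fin.last N)
        = univ.filter (· ≠ (0 : Fin (N+1))) from by
      ext i; simp [Fin.le_last]] at h
    rw [← hrepr (mol x 0) (mol_sum x 0) z] at h
    have : R (Fin.last N) x z = mol x 0 z + indic 0 z := by linarith
    rw [this]
    simp [mol]
  have hTlast : Tset (Fin.last N) = univ := by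
    ext z
    simp only [Finset.mem_univ, iff_true]
    rw [hTdef]
    simp only [Finset.mem_filter, Finset.mem_univ, true_and]
    exact ⟨z, by rw [hRlast z]; simp [indic]⟩
  -- evaluation of `bstar` through the molecule coefficients
  have hceval : ∀ i (μ : Fin (N+1) → ℝ), (∑ x, μ x = 0) →
      bstar i μ = ∑ x, μ x * c i x := fun i μ h => bs_eval (bstar i) (hlin i) μ h
  -- the one-step difference identity
  have hdelta : ∀ n : Fin (N+1), n ≠ 0 → ∀ x z,
      c n x * b n z = R n x z - R (pred n) x z := by
    intro n hn x z
    have hnv : n.val ≠ 0 := fun h => hn (Fin.ext h)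
    have hpv : (pred n).val = n.val - 1 := rfl
    have hins : univ.filter (fun i : Fin (N+1) => i ≠ 0 ∧ i ≤ n)
        = insert n (univ.filter (fun i : Fin (N+1) => i ≠ 0 ∧ i ≤ pred n)) := by
      ext i
      simp only [Finset.mem_filter, Finset.mem_univ, true_and, Finset.mem_insert,
        Fin.le_def, Ne, Fin.ext_iff, Fin.val_zero, hpv]
      omega
    have hnm : n ∉ univ.filter (fun i : Fin (N+1) => i ≠ 0 ∧ i ≤ pred n) := by
      simp only [Finset.mem_filter, Finset.mem_univ, true_and, not_and, Fin.le_def, hpv]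
      intro _
      omega
    have h1 := hId n x z
    have h2 := hId (pred n) x z
    rw [hins, Finset.sum_insert hnm, h2] at h1
    rw [hcdef]
    linarith
  -- the core duality identity `1 = ∑ₓ bₙ(x) cₙ(x)`
  have hone : ∀ n : Fin (N+1), n ≠ 0 → (1 : ℝ) = ∑ x, b n x * c n x := by
    intro n hn
    have h1 : bstar n (b n) = 1 := by rw [hdual n n hn hn, if_pos rfl]
    rw [← h1, hceval n (b n) (hsum n hn)]
  -- monotonicity of the supports
  have hmono : ∀ n : Fin (N+1), n ≠ 0 → Tset (pred n) ⊆ Tset n := by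
    intro n hn z hz
    by_contra hzn
    have hRz1 : ∀ x, R n x z = 0 := fun x => hTzero n x z hzn
    have hRz0 : R (pred n) z = indic z := hfixT (pred n) z hz
    have hzz : R (pred n) z z = 1 := by rw [hRz0]; simp [indic]
    have ha : c n z * b n z = -1 := by
      have h := hdelta n hn z z
      rw [hRz1 z, hzz] at h
      linarith
    have ha0 : c n z ≠ 0 := fun h => by rw [h, zero_mul] at ha; norm_num at ha
    have hcx : ∀ x, c n x = c n z * R (pred n) x z := by
      intro x
      have h := hdelta n hn x z
      rw [hRz1 x] at h
      linear_combination c n x * ha - c n z * h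
    have hbnx : ∀ x, c n z * b n x = R n z x - indic z x := by
      intro x
      have h := hdelta n hn z x
      rw [hRz0] at h
      exact h
    have e : ∀ x, b n x * c n x = (R n z x - indic z x) * R (pred n) x z := by
      intro x
      rw [hcx x, show b n x * (c n z * R (pred n) x z)
          = (c n z * b n x) * R (pred n) x z from by ring, hbnx x]
    have htwo : ∑ x, R n z x * R (pred n) x z = 2 := by
      have h1 : ∑ x, b n x * c n x
          = ∑ x, R n z x * R (pred n) x z - ∑ x, indic z x * R (pred n) x z := by
        rw [← Finset.sum_sub_distrib]
        exact Finset.sum_congr rfl fun x _ => by rw [e x]; ring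
      rw [sum_indic_mul z (fun x => R (pred n) x z), hzz] at h1
      have h0 := hone n hn
      linarith
    have hle : ∑ x, R n z x * R (pred n) x z ≤ 1 := by
      calc ∑ x, R n z x * R (pred n) x z
          ≤ ∑ x, R n z x * 1 :=
            Finset.sum_le_sum fun x _ =>
              mul_le_mul_of_nonneg_left (hRle1 _ _ _) ((hR n z).1 x)
        _ = 1 := by simp only [mul_one]; exact (hR n z).2.2
    linarith
  -- the new point at each level is unique
  have huniq : ∀ n : Fin (N+1), n ≠ 0 → ∀ y y' : Fin (N+1),
      y ∈ Tset n → y ∉ Tset (pred n) → y' ∈ Tset n → y' ∉ Tset (pred n) → y = y' := by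
    intro n hn y y' hy1 hy0 hy1' hy0'
    by_contra hne
    have hRy : R n y = indic y := hfixT n y hy1
    have hRy' : R n y' = indic y' := hfixT n y' hy1'
    have hy : c n y * b n y = 1 := by
      have h := hdelta n hn y y
      rw [hRy, hTzero (pred n) y y hy0] at h
      simpa [indic] using h
    have hy' : c n y' * b n y' = 1 := by
      have h := hdelta n hn y' y'
      rw [hRy', hTzero (pred n) y' y' hy0'] at h
      simpa [indic] using h
    have hzero : c n y * b n y' = 0 := by
      have h := hdelta n hn y y'
      rw [hRy, hTzero (pred n) y y' hy0'] at h
      have : indic y y' = 0 := by simp [indic, Ne.symm hne]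
      rw [this] at h
      linarith
    have hby' : b n y' ≠ 0 := fun h => by rw [h, mul_zero] at hy'; norm_num at hy'
    have hcy : c n y = 0 := by
      rcases mul_eq_zero.mp hzero with h | h
      · exact h
      · exact absurd h hby'
    rw [hcy, zero_mul] at hy
    norm_num at hy
  -- cardinalities of the supports
  have hcard0 : (Tset 0).card = 1 := by rw [hT0]; simp
  have hcardlast : (Tset (Fin.last N)).card = N + 1 := by
    rw [hTlast, Finset.card_univ, Fintype.card_fin]
  have hstepcard : ∀ n : Fin (N+1), n ≠ 0 →
      (Tset n).card ≤ (Tset (pred n)).card + 1 := by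
    intro n hn
    have h1 : (Tset n \ Tset (pred n)).card ≤ 1 :=
      Finset.card_le_one.mpr (by
        intro y hy y' hy'
        rw [Finset.mem_sdiff] at hy hy'
        exact huniq n hn y y' hy.1 hy.2 hy'.1 hy'.2)
    have h2 : (Tset n).card ≤ (Tset n \ Tset (pred n)).card + (Tset (pred n)).card :=
      Finset.card_le_card_sdiff_add_card
    omega
  set mk : ℕ → Fin (N+1) := fun k => ⟨min k N, by omega⟩ with hmkdef
  have hmkval : ∀ k, k ≤ N → (mk k).val = k := by
    intro k hk
    simp [hmkdef]
    omega
  have hmk0 : mk 0 = 0 := by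
    apply Fin.ext
    rw [hmkval 0 (Nat.zero_le N)]
    rfl
  have hmkself : ∀ n : Fin (N+1), mk n.val = n := by
    intro n
    apply Fin.ext
    rw [hmkval n.val (by omega)]
  have hmklast : mk N = Fin.last N := by
    apply Fin.ext
    rw [hmkval N le_rfl]
    rfl
  have hmkne : ∀ k, k + 1 ≤ N → mk (k+1) ≠ 0 := by
    intro k hk h
    have := congrArg Fin.val h
    rw [hmkval (k+1) hk] at this
    simp at this
  have hmkpred : ∀ k, k + 1 ≤ N → pred (mk (k+1)) = mk k := by
    intro k hk
    apply Fin.ext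
    show (mk (k+1)).val - 1 = (mk k).val
    rw [hmkval (k+1) hk, hmkval k (by omega)]
    omega
  have hpredmk : ∀ n : Fin (N+1), pred n = mk (n.val - 1) := by
    intro n
    apply Fin.ext
    show n.val - 1 = (mk (n.val - 1)).val
    rw [hmkval (n.val - 1) (by omega)]
  have hA : ∀ k, k ≤ N → (Tset (mk k)).card ≤ k + 1 := by
    intro k
    induction k with
    | zero => intro _; rw [hmk0]; omega
    | succ k ih =>
        intro hk
        have h1 := hstepcard (mk (k+1)) (hmkne k hk)
        rw [hmkpred k hk] at h1
        have h2 := ih (by omega)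
        omega
  have hB : ∀ j, j ≤ N → N + 1 ≤ (Tset (mk (N - j))).card + j := by
    intro j
    induction j with
    | zero =>
        intro _
        rw [Nat.sub_zero, hmklast, hcardlast]
    | succ j ih =>
        intro hj
        have h1 := hstepcard (mk (N - j)) (by
          rw [show N - j = (N - (j+1)) + 1 from by omega]
          exact hmkne _ (by omega))
        rw [show mk (N - j) = mk ((N - (j+1)) + 1) from by rw [show N - j = (N - (j+1)) + 1 from by omega]] at h1
        rw [hmkpred _ (by omega)] at h1
        have h2 := ih (by omega)
        rw [show mk (N - j) = mk ((N - (j+1)) + 1) from by rw [show N - j = (N - (j+1)) + 1 from by omega]] at h2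
        omega
  have hcardk : ∀ k, k ≤ N → (Tset (mk k)).card = k + 1 := by
    intro k hk
    have h1 := hA k hk
    have h2 := hB (N - k) (by omega)
    rw [show N - (N - k) = k from by omega] at h2
    omega
  -- choice of the new point at each level
  have hnonem : ∀ n : Fin (N+1), n ≠ 0 → ∃ y, y ∈ Tset n ∧ y ∉ Tset (pred n) := by
    intro n hn
    have hnv : n.val ≠ 0 := fun h => hn (Fin.ext h)
    have hc1 : (Tset n).card = n.val + 1 := by
      have h := hcardk n.val (by omega)
      rw [hmkself n] at h
      exact h
    have hc2 : (Tset (pred n)).card = n.val := by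
      rw [hpredmk n]
      have h3 := hcardk (n.val - 1) (by omega)
      omega
    have hns : ¬ Tset n ⊆ Tset (pred n) := by
      intro hsub
      have := Finset.card_le_card hsub
      omega
    obtain ⟨y, hy1, hy2⟩ := Finset.not_subset.mp hns
    exact ⟨y, hy1, hy2⟩
  choose ynew hynew1 hynew2 using hnonem
  set g : Fin (N+1) → Fin (N+1) := fun n => if h : n = 0 then 0 else ynew n h with hgdef
  have hg0 : g 0 = 0 := by rw [hgdef]; simp
  have hgmem : ∀ n, g n ∈ Tset n := by
    intro n
    by_cases hn : n = 0
    · rw [hn, hg0]; exact h0T 0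
    · rw [hgdef]; simp only [dif_neg hn]; exact hynew1 n hn
  have hgnot : ∀ n, n ≠ 0 → g n ∉ Tset (pred n) := by
    intro n hn
    rw [hgdef]; simp only [dif_neg hn]; exact hynew2 n hn
  -- order-compatible monotone chain
  have hmonole : ∀ (k' : ℕ), k' ≤ N → ∀ k, k ≤ k' → Tset (mk k) ⊆ Tset (mk k') := by
    intro k'
    induction k' with
    | zero =>
        intro _ k hk
        rw [Nat.le_zero.mp hk]
    | succ k' ih =>
        intro hk' k hk
        rcases Nat.lt_or_ge k (k'+1) with h | h
        · refine (ih (by omega) k (by omega)).trans ?_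
          have := hmono (mk (k'+1)) (hmkne k' hk')
          rw [hmkpred k' hk'] at this
          exact this
        · rw [show k = k' + 1 from by omega]
  have hgmemle : ∀ (n : Fin (N+1)) (k : ℕ), k ≤ N → n.val ≤ k → g n ∈ Tset (mk k) := by
    intro n k hk hnk
    have h1 : g n ∈ Tset (mk n.val) := by rw [hmkself n]; exact hgmem n
    exact hmonole k hk n.val hnk h1
  have hgnotmem : ∀ (n : Fin (N+1)) (k : ℕ), k < n.val → g n ∉ Tset (mk k) := by
    intro n k hkn hmem
    have hn : n ≠ 0 := by
      intro h
      rw [h] at hkn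
      simp at hkn
    have := hmonole (n.val - 1) (by omega) k (by omega) hmem
    rw [← hpredmk n] at this
    exact hgnot n hn this
  have hginj : Function.Injective g := by
    intro i j hij
    by_contra hne
    rcases Nat.lt_or_ge i.val j.val with h | h
    · exact hgnotmem j i.val h (hij ▸ hgmemle i i.val (by omega) le_rfl)
    · have h' : j.val < i.val := by
        rcases Nat.lt_or_ge j.val i.val with h2 | h2
        · exact h2
        · exact absurd (Fin.ext (by omega)) hne
      exact hgnotmem i j.val h' (hij ▸ hgmemle j j.val (by omega) le_rfl)
  -- the supports are the initial segments of the enumeration `g`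
  have hTim : ∀ k, k ≤ N →
      Tset (mk k) = (univ.filter (fun i : Fin (N+1) => i.val ≤ k)).image g := by
    intro k hk
    refine (Finset.eq_of_subset_of_card_le ?_ ?_).symm
    · intro z hz
      obtain ⟨i, hi, rfl⟩ := Finset.mem_image.mp hz
      simp only [Finset.mem_filter, Finset.mem_univ, true_and] at hi
      exact hgmemle i k hk hi
    · rw [Finset.card_image_of_injective _ hginj, hcardk k hk]
      have : univ.filter (fun i : Fin (N+1) => i.val ≤ k) = Finset.Iic (mk k) := by
        ext i
        simp only [Finset.mem_filter, Finset.mem_univ, true_and, Finset.mem_Iic, Fin.le_def,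
          hmkval k hk]
      rw [this, Fin.card_Iic, hmkval k hk]
      all_goals omega
  have hgbij : Function.Bijective g := Finite.injective_iff_bijective.mp hginj
  -- assemble the data
  refine ⟨fun n => if n = 0 then 1 else b n (g n), Equiv.ofBijective g hgbij,
    fun n i => if n ≠ 0 ∧ i < n then R (pred n) (g n) (g i) else 0, hg0, ?_, ?_, ?_⟩
  · -- ρ n ≠ 0
    intro n hn
    simp only [if_neg hn]
    intro hb0
    have hkey1 : c n (g n) * b n (g n) = 1 := by
      have h := hdelta n hn (g n) (g n)
      rw [hfixT n (g n) (hgmem n), hTzero (pred n) (g n) (g n) (hgnot n hn)] at h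
      simpa [indic] using h
    rw [hb0, mul_zero] at hkey1
    norm_num at hkey1
  · -- LamData
    refine ⟨fun n i => ?_, fun n i hi => ?_, fun n hn => ?_⟩
    · by_cases h : n ≠ 0 ∧ i < n
      · simp only [if_pos h]
        exact ⟨(hR (pred n) (g n)).1 _, hRle1 _ _ _⟩
      · simp only [if_neg h]
        exact ⟨le_rfl, zero_le_one⟩
    · exact if_neg (fun hc => hi hc.2)
    · have hnv : n.val ≠ 0 := fun h => hn (Fin.ext h)
      have hpn : pred n = mk (n.val - 1) := hpredmk n
      have hfeq : univ.filter (fun i : Fin (N+1) => i < n)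
          = univ.filter (fun i : Fin (N+1) => i.val ≤ n.val - 1) := by
        ext i
        simp only [Finset.mem_filter, Finset.mem_univ, true_and, Fin.lt_def]
        omega
      calc ∑ i, (if n ≠ 0 ∧ i < n then R (pred n) (g n) (g i) else 0)
          = ∑ i, (if i < n then R (pred n) (g n) (g i) else 0) := by
            refine Finset.sum_congr rfl fun i _ => ?_
            by_cases h : i < n
            · rw [if_pos ⟨hn, h⟩, if_pos h]
            · rw [if_neg (fun hc => h hc.2), if_neg h]
        _ = ∑ i ∈ univ.filter (fun i : Fin (N+1) => i < n), R (pred n) (g n) (g i) := by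
            rw [Finset.sum_filter]
        _ = ∑ z ∈ (univ.filter (fun i : Fin (N+1) => i.val ≤ n.val - 1)).image g,
              R (pred n) (g n) z := by
            rw [hfeq, Finset.sum_image (fun x _ y _ h => hginj h)]
        _ = ∑ z ∈ Tset (pred n), R (pred n) (g n) z := by
            rw [hpn, hTim (n.val - 1) (by omega)]
        _ = ∑ z, R (pred n) (g n) z := by
            refine Finset.sum_subset (Finset.subset_univ _) fun z _ hz => ?_
            exact hTzero (pred n) (g n) z hz
        _ = 1 := (hR (pred n) (g n)).2.2
  · -- the form of the basis vectors
    intro n hn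
    have hnv : n.val ≠ 0 := fun h => hn (Fin.ext h)
    have hpn : pred n = mk (n.val - 1) := hpredmk n
    have hkey1 : c n (g n) * b n (g n) = 1 := by
      have h := hdelta n hn (g n) (g n)
      rw [hfixT n (g n) (hgmem n), hTzero (pred n) (g n) (g n) (hgnot n hn)] at h
      simpa [indic] using h
    have hkey2 : ∀ ζ, c n (g n) * b n ζ = indic (g n) ζ - R (pred n) (g n) ζ := by
      intro ζ
      have h := hdelta n hn (g n) ζ
      rw [hfixT n (g n) (hgmem n)] at h
      exact h
    funext ζ
    simp only [if_neg hn, Equiv.ofBijective_apply]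
    have hinner : ∑ i, (if n ≠ 0 ∧ i < n then R (pred n) (g n) (g i) else 0) * indic (g i) ζ
        = R (pred n) (g n) ζ := by
      by_cases hζ : ζ ∈ Tset (pred n)
      · rw [hpn] at hζ
        obtain ⟨j, hj, rfl⟩ := Finset.mem_image.mp ((hTim (n.val - 1) (by omega)) ▸ hζ)
        simp only [Finset.mem_filter, Finset.mem_univ, true_and] at hj
        rw [Finset.sum_eq_single j]
        · rw [if_pos ⟨hn, by rw [Fin.lt_def]; omega⟩]
          simp [indic, hpn]
        · intro i _ hij
          have : indic (g i) (g j) = 0 := by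
            simp only [indic, ite_eq_right_iff]
            intro hgij
            exact absurd (hginj hgij) (Ne.symm hij)
          rw [this, mul_zero]
        · intro h
          exact absurd (Finset.mem_univ j) h
      · rw [hTzero (pred n) (g n) ζ hζ]
        refine Finset.sum_eq_zero fun i _ => ?_
        by_cases hin : n ≠ 0 ∧ i < n
        · have hgi : g i ∈ Tset (pred n) := by
            rw [hpn]
            exact hgmemle i (n.val - 1) (by omega) (by have := hin.2; rw [Fin.lt_def] at this; omega)
          have : indic (g i) ζ = 0 := by
            simp only [indic, ite_eq_right_iff]
            intro hgz
            exact absurd (hgz ▸ hgi) hζ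
          rw [this, mul_zero]
        · rw [if_neg hin, zero_mul]
    rw [hinner]
    have h1 := hkey1
    have h2 := hkey2 ζ
    linear_combination b n (g n) * h2 - b n ζ * h1


theorem statement2 (N : ℕ) (d : Fin (N+1) → Fin (N+1) → ℝ) (hd : IsMetric d)
    (b : Fin (N+1) → Fin (N+1) → ℝ) (bstar : Fin (N+1) → (Fin (N+1) → ℝ) → ℝ)
    (hbasis : IsFreeBasis N b bstar) :
    (IsStochProj N b bstar ↔
      ∃ (ρ : Fin (N+1) → ℝ) (F : Equiv.Perm (Fin (N+1)))
        (lam : Fin (N+1) → Fin (N+1) → ℝ),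
        F 0 = 0 ∧ (∀ n : Fin (N+1), n ≠ 0 → ρ n ≠ 0) ∧ LamData N lam ∧
        ∀ n : Fin (N+1), n ≠ 0 →
          b n = fun z => ρ n * (indic (F n) z - ∑ i, lam n i * indic (F i) z)) ∧
    (∀ (ρ : Fin (N+1) → ℝ) (F : Equiv.Perm (Fin (N+1)))
        (lam : Fin (N+1) → Fin (N+1) → ℝ),
        F 0 = 0 → (∀ n : Fin (N+1), n ≠ 0 → ρ n ≠ 0) → LamData N lam →
        (∀ n : Fin (N+1), n ≠ 0 →
          b n = fun z => ρ n * (indic (F n) z - ∑ i, lam n i * indic (F i) z)) →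
        ∀ n : Fin (N+1), n ≠ 0 →
          tcNorm d 0 (b n) = |ρ n| * ∑ i, lam n i * d (F n) (F i)) := by
  constructor
  · constructor
    · intro hsp
      exact forward_struct b bstar hbasis hsp
    · rintro ⟨ρ, F, lam, hF0, hρ, hlam, hform⟩
      exact backward_isStochProj b bstar hbasis ρ F lam hF0 hlam hform
  · intro ρ F lam hF0 hρ hlam hform n hn
    rw [hform n hn]
    exact tcNorm_form d hd (ρ n) (⇑F) n (lam n) (fun i => (hlam.1 n i).1) (hlam.2.2 n hn)

end TCS
end
end

section
/- Let (M,d) be a finite metric space with N+1 points and let (b_n) ∈ B(M) have data F ∈ Σ(M) and (λ_{n,i}). Then the product probability π_{(b_n)} is a probability distribution on T(F). Moreover: (i) for every subgraph S of some tree in T(F), Σ_{T∈T(F), S⊆T} Π_{e∈E(T)∖E(S)} λ_e = 1, and consequently π_{(b_n)}(T : S ⊆ T) = Π_{e∈E(S)} λ_e; (ii) for all 1 ≤ z, n ≤ N (identifying M with {0,…,N} via F), b*_n(δ_z) = Σ_{C ∈ →[z,n]} π_{(b_n)}(T : C ⊆ T). -/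
open Finset

noncomputable section
open scoped Classical

namespace TCS

lemma sum_tr_prod {N : ℕ} (g : Fin (N+1) → Fin (N+1) → ℝ) :
    ∑ T : Tr N, ∏ n ∈ univ.filter (fun n : Fin (N+1) => n ≠ 0), g n (T.1 n)
      = ∏ n ∈ univ.filter (fun n : Fin (N+1) => n ≠ 0),
          ∑ i ∈ univ.filter (fun i => i < n), g n i := by
  classical
  set t : Fin (N+1) → Finset (Fin (N+1)) :=
    fun n => if n = 0 then {0} else univ.filter (fun i => i < n) with ht
  set f : Fin (N+1) → Fin (N+1) → ℝ := fun n i => if n = 0 then 1 else g n i with hf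
  have key : ∏ n, ∑ j ∈ t n, f n j = ∑ x ∈ Fintype.piFinset t, ∏ n, f n (x n) :=
    Finset.prod_univ_sum t f
  have hL : ∑ x ∈ Fintype.piFinset t, ∏ n, f n (x n)
      = ∑ T : Tr N, ∏ n ∈ univ.filter (fun n : Fin (N+1) => n ≠ 0), g n (T.1 n) := by
    refine Finset.sum_bij' (fun x hx => (⟨x, ?_, ?_⟩ : Tr N)) (fun T _ => T.1)
      ?_ ?_ ?_ ?_ ?_
    · have h0 : x 0 ∈ t 0 := Fintype.mem_piFinset.mp hx 0
      simpa [ht] using h0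
    · intro n hn
      have := Fintype.mem_piFinset.mp hx n
      simpa [ht, hn] using this
    · intro x hx; exact Finset.mem_univ _
    · intro T hT
      rw [Fintype.mem_piFinset]
      intro n
      by_cases hn : n = 0
      · simp [ht, hn, T.2.1]
      · simp [ht, hn, T.2.2 n hn]
    · intro x hx; rfl
    · intro T hT; rfl
    · intro x hx
      rw [← Finset.prod_filter_mul_prod_filter_not (univ : Finset (Fin (N+1)))
        (fun n => n ≠ 0)]
      have h2 : ∏ n ∈ univ.filter (fun n : Fin (N+1) => ¬ n ≠ 0), f n (x n) = 1 := by
        apply Finset.prod_eq_one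
        intro n hn
        simp only [Finset.mem_filter, not_not] at hn
        simp [hf, hn.2]
      rw [h2, mul_one]
      apply Finset.prod_congr rfl
      intro n hn
      simp only [Finset.mem_filter] at hn
      simp [hf, hn.2]
  have hR : ∏ n, ∑ j ∈ t n, f n j
      = ∏ n ∈ univ.filter (fun n : Fin (N+1) => n ≠ 0),
          ∑ i ∈ univ.filter (fun i => i < n), g n i := by
    rw [← Finset.prod_filter_mul_prod_filter_not (univ : Finset (Fin (N+1)))
      (fun n => n ≠ 0)]
    have h2 : ∏ n ∈ univ.filter (fun n : Fin (N+1) => ¬ n ≠ 0), ∑ j ∈ t n, f n j = 1 := by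
      apply Finset.prod_eq_one
      intro n hn
      simp only [Finset.mem_filter, not_not] at hn
      simp [ht, hf, hn.2]
    rw [h2, mul_one]
    apply Finset.prod_congr rfl
    intro n hn
    simp only [Finset.mem_filter] at hn
    apply Finset.sum_congr
    · simp [ht, hn.2]
    · intro i _; simp [hf, hn.2]
  rw [← hL, ← hR, key]

lemma lam_sum_lt {N : ℕ} {lam : Fin (N+1) → Fin (N+1) → ℝ} (hlam : LamData N lam)
    {n : Fin (N+1)} (hn : n ≠ 0) : ∑ i ∈ univ.filter (fun i => i < n), lam n i = 1 := by
  rw [← hlam.2.2 n hn, ← Finset.sum_filter_add_sum_filter_not univ (fun i => i < n)]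
  have h2 : ∑ i ∈ univ.filter (fun i => ¬ i < n), lam n i = 0 := by
    apply Finset.sum_eq_zero
    intro i hi
    simp only [Finset.mem_filter] at hi
    exact hlam.2.1 n i hi.2
  rw [h2, add_zero]

lemma fst_ne_zero {N : ℕ} {S : Finset (Fin (N+1) × Fin (N+1))}
    (h1 : ∀ q ∈ S, q.2 < q.1) {q : Fin (N+1) × Fin (N+1)} (hq : q ∈ S) : q.1 ≠ 0 := by
  intro h
  have := h1 q hq
  rw [h] at this
  exact absurd this (Fin.not_lt_zero _)

lemma part2a {N : ℕ} {lam : Fin (N+1) → Fin (N+1) → ℝ} (hlam : LamData N lam)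
    (S : Finset (Fin (N+1) × Fin (N+1)))
    (h1 : ∀ q ∈ S, q.2 < q.1) (h2 : ∀ q ∈ S, ∀ q' ∈ S, q.1 = q'.1 → q.2 = q'.2)
    {instT : DecidablePred (fun T : Tr N => ∀ q ∈ S, T.1 q.1 = q.2)} :
    (∑ T ∈ @Finset.filter _ (fun T : Tr N => ∀ q ∈ S, T.1 q.1 = q.2) instT univ,
        ∏ n ∈ univ.filter (fun n : Fin (N+1) => n ≠ 0 ∧ n ∉ S.image Prod.fst),
          lam n (T.1 n)) = 1 := by
  classical
  set sig : Fin (N+1) → Fin (N+1) :=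
    fun n => if h : ∃ m, (n, m) ∈ S then h.choose else 0 with hsigdef
  have hsig : ∀ n ∈ S.image Prod.fst, (n, sig n) ∈ S := by
    intro n hn
    obtain ⟨q, hq, hq1⟩ := Finset.mem_image.mp hn
    have hex : ∃ m, (n, m) ∈ S := ⟨q.2, by rw [← hq1]; exact hq⟩
    simp only [hsigdef, dif_pos hex]
    exact hex.choose_spec
  have huniq : ∀ q ∈ S, q.2 = sig q.1 := by
    intro q hq
    exact h2 q hq (q.1, sig q.1) (hsig _ (Finset.mem_image_of_mem _ hq)) rfl
  set g : Fin (N+1) → Fin (N+1) → ℝ := fun n i =>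
    if n ∈ S.image Prod.fst then (if i = sig n then 1 else 0) else lam n i with hgdef
  have hpt : ∀ T : Tr N,
      (if (∀ q ∈ S, T.1 q.1 = q.2) then
        ∏ n ∈ univ.filter (fun n : Fin (N+1) => n ≠ 0 ∧ n ∉ S.image Prod.fst),
          lam n (T.1 n) else 0)
      = ∏ n ∈ univ.filter (fun n : Fin (N+1) => n ≠ 0), g n (T.1 n) := by
    intro T
    rw [← Finset.prod_filter_mul_prod_filter_not
      (univ.filter (fun n : Fin (N+1) => n ≠ 0)) (fun n => n ∈ S.image Prod.fst),
      Finset.filter_filter, Finset.filter_filter]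
    have hA : ∏ n ∈ univ.filter (fun n : Fin (N+1) => n ≠ 0 ∧ n ∈ S.image Prod.fst),
        g n (T.1 n) = if (∀ q ∈ S, T.1 q.1 = q.2) then 1 else 0 := by
      have heq : univ.filter (fun n : Fin (N+1) => n ≠ 0 ∧ n ∈ S.image Prod.fst)
          = S.image Prod.fst := by
        ext n
        simp only [Finset.mem_filter, Finset.mem_univ, true_and, and_iff_right_iff_imp]
        intro hn
        obtain ⟨q, hq, hq1⟩ := Finset.mem_image.mp hn
        rw [← hq1]; exact fst_ne_zero h1 hq
      rw [heq]
      have : ∀ n ∈ S.image Prod.fst, g n (T.1 n) = if T.1 n = sig n then 1 else 0 := by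
        intro n hn; simp only [hgdef]; rw [if_pos hn]
      rw [Finset.prod_congr rfl this, Finset.prod_boole]
      congr 1
      simp only [eq_iff_iff]
      constructor
      · intro h q hq
        rw [huniq q hq]
        exact h q.1 (Finset.mem_image_of_mem _ hq)
      · intro h n hn
        have := h _ (hsig n hn)
        exact this
    have hB : ∏ n ∈ univ.filter (fun n : Fin (N+1) => n ≠ 0 ∧ n ∉ S.image Prod.fst),
        g n (T.1 n)
        = ∏ n ∈ univ.filter (fun n : Fin (N+1) => n ≠ 0 ∧ n ∉ S.image Prod.fst),
          lam n (T.1 n) := by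
      apply Finset.prod_congr rfl
      intro n hn
      simp only [Finset.mem_filter] at hn
      simp only [hgdef]; rw [if_neg hn.2.2]
    rw [hA, hB]
    by_cases h : ∀ q ∈ S, T.1 q.1 = q.2 <;> simp [h]
  rw [Finset.sum_filter, Finset.sum_congr rfl (fun T _ => hpt T), sum_tr_prod]
  apply Finset.prod_eq_one
  intro n hn
  simp only [Finset.mem_filter, Finset.mem_univ, true_and] at hn
  by_cases hns : n ∈ S.image Prod.fst
  · have hlt : sig n < n := h1 _ (hsig n hns)
    have : ∀ i ∈ univ.filter (fun i => i < n), g n i = if i = sig n then 1 else 0 := by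
      intro i hi; simp only [hgdef]; rw [if_pos hns]
    rw [Finset.sum_congr rfl this, Finset.sum_ite_eq' (univ.filter (fun i => i < n))
      (sig n) (fun _ => (1:ℝ))]
    simp [hlt]
  · have : ∀ i ∈ univ.filter (fun i => i < n), g n i = lam n i := by
      intro i hi; simp only [hgdef]; rw [if_neg hns]
    rw [Finset.sum_congr rfl this, lam_sum_lt hlam hn]

lemma probOf_eq {N : ℕ} (p : Tr N → ℝ) (P : Tr N → Prop) [inst : DecidablePred P] :
    probOf p P = ∑ T ∈ univ.filter P, p T := by
  unfold probOf
  exact congrArg (fun i : DecidablePred P => (@Finset.filter _ P i univ).sum p)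
    (Subsingleton.elim _ _)

lemma part2b {N : ℕ} {lam : Fin (N+1) → Fin (N+1) → ℝ} (hlam : LamData N lam)
    (S : Finset (Fin (N+1) × Fin (N+1)))
    (h1 : ∀ q ∈ S, q.2 < q.1) (h2 : ∀ q ∈ S, ∀ q' ∈ S, q.1 = q'.1 → q.2 = q'.2) :
    probOf (prodProb lam) (fun T => ∀ q ∈ S, T.1 q.1 = q.2) = ∏ q ∈ S, lam q.1 q.2 := by
  classical
  have hinj : ∀ q ∈ S, ∀ q' ∈ S, q.1 = q'.1 → q = q' := by
    intro q hq q' hq' hqq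
    have h3 := h2 q hq q' hq' hqq
    exact Prod.ext hqq h3
  have hsplit : ∀ T : Tr N, (∀ q ∈ S, T.1 q.1 = q.2) →
      prodProb lam T = (∏ q ∈ S, lam q.1 q.2) *
        ∏ n ∈ univ.filter (fun n : Fin (N+1) => n ≠ 0 ∧ n ∉ S.image Prod.fst),
          lam n (T.1 n) := by
    intro T hT
    unfold prodProb
    rw [← Finset.prod_filter_mul_prod_filter_not
      (univ.filter (fun n : Fin (N+1) => n ≠ 0)) (fun n => n ∈ S.image Prod.fst),
      Finset.filter_filter, Finset.filter_filter]
    congr 1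
    have heq : univ.filter (fun n : Fin (N+1) => n ≠ 0 ∧ n ∈ S.image Prod.fst)
        = S.image Prod.fst := by
      ext n
      simp only [Finset.mem_filter, Finset.mem_univ, true_and, and_iff_right_iff_imp]
      intro hn
      obtain ⟨q, hq, hq1⟩ := Finset.mem_image.mp hn
      rw [← hq1]; exact fst_ne_zero h1 hq
    rw [heq, Finset.prod_image hinj]
    apply Finset.prod_congr rfl
    intro q hq
    rw [hT q hq]
  rw [probOf_eq]
  have hcong : ∑ T ∈ univ.filter (fun T : Tr N => ∀ q ∈ S, T.1 q.1 = q.2), prodProb lam T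
      = ∑ T ∈ univ.filter (fun T : Tr N => ∀ q ∈ S, T.1 q.1 = q.2),
          (∏ q ∈ S, lam q.1 q.2) *
            ∏ n ∈ univ.filter (fun n : Fin (N+1) => n ≠ 0 ∧ n ∉ S.image Prod.fst),
              lam n (T.1 n) :=
    Finset.sum_congr rfl (fun T hT => hsplit T ((Finset.mem_filter.mp hT).2))
  rw [hcong, ← Finset.mul_sum, part2a hlam S h1 h2, mul_one]

lemma probOf_congr {N : ℕ} (p : Tr N → ℝ) {P Q : Tr N → Prop} (h : ∀ T, P T ↔ Q T) :
    probOf p P = probOf p Q := by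
  unfold probOf
  apply Finset.sum_congr _ (fun _ _ => rfl)
  apply Finset.filter_congr
  intro T _
  simp only [h]


variable {N : ℕ}

/-- predecessor of `a` in `S`: max element of `S` below `a`. -/
def predS (S : Finset (Fin (N+1))) (a : Fin (N+1)) : Fin (N+1) :=
  ((S.filter (fun c => c < a)).max).unbotD 0

lemma predS_spec {S : Finset (Fin (N+1))} {a : Fin (N+1)} (h : ∃ c ∈ S, c < a) :
    predS S a ∈ S ∧ predS S a < a ∧ ∀ c ∈ S, c < a → c ≤ predS S a := by
  obtain ⟨c, hc, hca⟩ := h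
  have hne : (S.filter (fun c => c < a)).Nonempty := ⟨c, Finset.mem_filter.mpr ⟨hc, hca⟩⟩
  obtain ⟨m, hm⟩ := Finset.max_of_nonempty hne
  have hmem := Finset.mem_of_max hm
  rw [Finset.mem_filter] at hmem
  have hp : predS S a = m := by unfold predS; rw [hm]; rfl
  rw [hp]
  refine ⟨hmem.1, hmem.2, fun c' hc' hc'a => ?_⟩
  have hcmem : c' ∈ S.filter (fun x => x < a) := Finset.mem_filter.mpr ⟨hc', hc'a⟩
  exact Finset.le_max_of_eq hcmem hm

lemma predS_eq {S : Finset (Fin (N+1))} {a m : Fin (N+1)}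
    (hsub : S.filter (fun c => c < a) = {m}) : predS S a = m := by
  unfold predS
  rw [hsub]
  rfl

/-- edge pairs of a chain. -/
def pairsOf (S : Finset (Fin (N+1))) : Finset (Fin (N+1) × Fin (N+1)) :=
  (S.filter (fun a => ∃ c ∈ S, c < a)).image (fun a => (a, predS S a))

lemma pairsOf_lt {S : Finset (Fin (N+1))} {q : Fin (N+1) × Fin (N+1)}
    (hq : q ∈ pairsOf S) : q.2 < q.1 := by
  obtain ⟨a, ha, rfl⟩ := Finset.mem_image.mp hq
  rw [Finset.mem_filter] at ha
  exact (predS_spec ha.2).2.1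

lemma pairsOf_fun {S : Finset (Fin (N+1))} {q q' : Fin (N+1) × Fin (N+1)}
    (hq : q ∈ pairsOf S) (hq' : q' ∈ pairsOf S) (h : q.1 = q'.1) : q.2 = q'.2 := by
  obtain ⟨a, ha, rfl⟩ := Finset.mem_image.mp hq
  obtain ⟨a', ha', rfl⟩ := Finset.mem_image.mp hq'
  simp only at h
  rw [h]

lemma chain_iff_pairs (S : Finset (Fin (N+1))) (T : Tr N) :
    chainInTree S T ↔ ∀ q ∈ pairsOf S, T.1 q.1 = q.2 := by
  constructor
  · intro h q hq
    obtain ⟨a, ha, rfl⟩ := Finset.mem_image.mp hq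
    rw [Finset.mem_filter] at ha
    obtain ⟨hTa, hmax⟩ := h a ha.1 ha.2
    obtain ⟨hpS, hpa, hple⟩ := predS_spec ha.2
    have ha0 : a ≠ 0 := by
      obtain ⟨c, _, hca⟩ := ha.2
      intro h0
      rw [h0] at hca
      exact absurd hca (Fin.not_lt_zero c)
    have hTlt : T.1 a < a := T.2.2 a ha0
    exact le_antisymm (hple _ hTa hTlt) (hmax _ hpS hpa)
  · intro h a haS hex
    have hq : (a, predS S a) ∈ pairsOf S :=
      Finset.mem_image_of_mem _ (Finset.mem_filter.mpr ⟨haS, hex⟩)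
    have hTa := h _ hq
    simp only at hTa
    obtain ⟨hpS, hpa, hple⟩ := predS_spec hex
    rw [hTa]
    exact ⟨hpS, fun c hc hca => hple c hc hca⟩

/-- weight of a chain. -/
def w8 (lam : Fin (N+1) → Fin (N+1) → ℝ) (S : Finset (Fin (N+1))) : ℝ :=
  ∏ a ∈ S.filter (fun a => ∃ c ∈ S, c < a), lam a (predS S a)

lemma probOf_chain {lam : Fin (N+1) → Fin (N+1) → ℝ} (hlam : LamData N lam)
    (S : Finset (Fin (N+1))) :
    probOf (prodProb lam) (fun T => chainInTree S T) = w8 lam S := by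
  rw [probOf_congr _ (fun T => chain_iff_pairs S T),
    part2b hlam (pairsOf S) (fun q hq => pairsOf_lt hq)
      (fun q hq q' hq' h => pairsOf_fun hq hq' h)]
  unfold pairsOf w8
  rw [Finset.prod_image]
  intro a ha a' ha' h
  exact congrArg Prod.fst h

/-- the set of chains from `w` up to `z`. -/
def Cset (z w : Fin (N+1)) : Finset (Finset (Fin (N+1))) :=
  univ.filter (fun S : Finset (Fin (N+1)) => z ∈ S ∧ w ∈ S ∧ ∀ a ∈ S, w ≤ a ∧ a ≤ z)

lemma Cset_empty {z w : Fin (N+1)} (h : z < w) : Cset z w = ∅ := by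
  unfold Cset
  rw [Finset.filter_eq_empty_iff]
  rintro S - ⟨hz, hw, hall⟩
  exact absurd ((hall w hw).2) (not_le.mpr h)

lemma Cset_self (z : Fin (N+1)) : Cset z z = {{z}} := by
  unfold Cset
  ext S
  simp only [Finset.mem_filter, Finset.mem_univ, true_and, Finset.mem_singleton]
  constructor
  · rintro ⟨hz, -, hall⟩
    ext a
    simp only [Finset.mem_singleton]
    constructor
    · intro ha
      exact le_antisymm (hall a ha).2 (hall a ha).1
    · rintro rfl; exact hz
  · rintro rfl
    refine ⟨Finset.mem_singleton_self z, Finset.mem_singleton_self z, ?_⟩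
    intro a ha
    rw [Finset.mem_singleton] at ha
    subst ha
    exact ⟨le_refl _, le_refl _⟩

lemma w8_single (lam : Fin (N+1) → Fin (N+1) → ℝ) (z : Fin (N+1)) :
    w8 lam {z} = 1 := by
  unfold w8
  apply Finset.prod_eq_one
  intro a ha
  rw [Finset.mem_filter] at ha
  obtain ⟨c, hc, hca⟩ := ha.2
  rw [Finset.mem_singleton] at hc ha
  exfalso
  rw [ha.1, hc] at hca
  exact lt_irrefl _ hca

lemma min_untop {S : Finset (Fin (N+1))} {m : Fin (N+1)} (hm : m ∈ S)
    (hb : ∀ a ∈ S, m ≤ a) : (S.min).untopD 0 = m := by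
  obtain ⟨a, ha⟩ := Finset.min_of_nonempty ⟨m, hm⟩
  have h1 : a ∈ S := Finset.mem_of_min ha
  have h2 : a ≤ m := Finset.min_le_of_eq hm ha
  have h3 : a = m := le_antisymm h2 (hb a h1)
  rw [ha, h3]
  rfl

def m0 (w : Fin (N+1)) (S : Finset (Fin (N+1))) : Fin (N+1) :=
  ((S.erase w).min).untopD 0

lemma w8_insert {lam : Fin (N+1) → Fin (N+1) → ℝ} {w m : Fin (N+1)}
    {S' : Finset (Fin (N+1))} (hm : m ∈ S') (hwm : w < m)
    (hmin : ∀ a ∈ S', m ≤ a) :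
    w8 lam (insert w S') = lam m w * w8 lam S' := by
  have hwS' : w ∉ S' := fun h => absurd (hmin w h) (not_le.mpr hwm)
  set P := insert w S' with hP
  have step1 : P.filter (fun a => ∃ c ∈ P, c < a) = S' := by
    ext a
    simp only [Finset.mem_filter]
    constructor
    · rintro ⟨haP, c, hcP, hca⟩
      rcases Finset.mem_insert.mp haP with rfl | h
      · exfalso
        rcases Finset.mem_insert.mp hcP with rfl | hcS
        · exact lt_irrefl _ hca
        · exact absurd hca (not_lt.mpr (le_of_lt (lt_of_lt_of_le hwm (hmin c hcS))))
      · exact h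
    · intro ha
      exact ⟨Finset.mem_insert_of_mem ha, w, Finset.mem_insert_self w S',
        lt_of_lt_of_le hwm (hmin a ha)⟩
  have step4 : predS P m = w := by
    apply predS_eq
    ext c
    simp only [Finset.mem_filter, Finset.mem_singleton]
    constructor
    · rintro ⟨hcP, hcm⟩
      rcases Finset.mem_insert.mp hcP with rfl | hcS
      · rfl
      · exact absurd hcm (not_lt.mpr (hmin c hcS))
    · intro hc
      subst hc
      exact ⟨Finset.mem_insert_self _ _, hwm⟩
  have step5 : ∀ a ∈ S'.erase m, predS P a = predS S' a := by
    intro a ha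
    rw [Finset.mem_erase] at ha
    have hma : m < a := lt_of_le_of_ne (hmin a ha.2) (Ne.symm ha.1)
    have hmmem : m ∈ S'.filter (fun c => c < a) := Finset.mem_filter.mpr ⟨hm, hma⟩
    have hle : (w : WithBot (Fin (N+1))) ≤ (S'.filter (fun c => c < a)).max :=
      le_trans (WithBot.coe_le_coe.mpr (le_of_lt hwm)) (Finset.le_max hmmem)
    have hmax : (P.filter (fun c => c < a)).max = (S'.filter (fun c => c < a)).max := by
      apply le_antisymm
      · apply Finset.max_le
        intro c hc
        rw [Finset.mem_filter] at hc
        rcases Finset.mem_insert.mp hc.1 with rfl | hcS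
        · exact hle
        · exact Finset.le_max (Finset.mem_filter.mpr ⟨hcS, hc.2⟩)
      · exact Finset.max_mono (Finset.filter_subset_filter _ (Finset.subset_insert w S'))
    unfold predS
    rw [hmax]
  have step6 : S'.filter (fun a => ∃ c ∈ S', c < a) = S'.erase m := by
    ext a
    simp only [Finset.mem_filter, Finset.mem_erase]
    constructor
    · rintro ⟨haS, c, hcS, hca⟩
      refine ⟨?_, haS⟩
      rintro rfl
      exact absurd hca (not_lt.mpr (hmin c hcS))
    · rintro ⟨hne, haS⟩
      exact ⟨haS, m, hm, lt_of_le_of_ne (hmin a haS) (Ne.symm hne)⟩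
  unfold w8
  rw [step1, step6, ← Finset.mul_prod_erase S' _ hm, step4]
  congr 1
  apply Finset.prod_congr rfl
  intro a ha
  rw [step5 a ha]

lemma mem_Cset {z w : Fin (N+1)} {S : Finset (Fin (N+1))} :
    S ∈ Cset z w ↔ z ∈ S ∧ w ∈ S ∧ ∀ a ∈ S, w ≤ a ∧ a ≤ z := by
  unfold Cset
  rw [Finset.mem_filter]
  simp only [Finset.mem_univ, true_and]

lemma Cset_decomp {lam : Fin (N+1) → Fin (N+1) → ℝ} {z w : Fin (N+1)} (hwz : w < z) :
    ∑ S ∈ Cset z w, w8 lam S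
      = ∑ m ∈ univ.filter (fun m => w < m ∧ m ≤ z), lam m w * ∑ S' ∈ Cset z m, w8 lam S' := by
  have hrhs : ∀ m, lam m w * ∑ S' ∈ Cset z m, w8 lam S'
      = ∑ S' ∈ Cset z m, lam m w * w8 lam S' := fun m => Finset.mul_sum _ _ _
  rw [Finset.sum_congr rfl (fun m _ => hrhs m), Finset.sum_sigma']
  symm
  refine Finset.sum_bij' (fun x (_ : x ∈ (univ.filter (fun m => w < m ∧ m ≤ z)).sigma
      (fun m => Cset z m)) => insert w x.2)
    (fun S (_ : S ∈ Cset z w) => (⟨m0 w S, S.erase w⟩ :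
      (_ : Fin (N+1)) × Finset (Fin (N+1)))) ?_ ?_ ?_ ?_ ?_
  · rintro ⟨m, S'⟩ hx
    rw [Finset.mem_sigma, Finset.mem_filter] at hx
    obtain ⟨⟨-, hwm, hmz⟩, hS'⟩ := hx
    rw [mem_Cset] at hS'
    obtain ⟨hz, hmS, hall⟩ := hS'
    rw [mem_Cset]
    refine ⟨Finset.mem_insert_of_mem hz, Finset.mem_insert_self _ _, ?_⟩
    intro a ha
    rcases Finset.mem_insert.mp ha with rfl | haS
    · exact ⟨le_refl _, le_of_lt hwz⟩
    · exact ⟨le_of_lt (lt_of_lt_of_le hwm (hall a haS).1), (hall a haS).2⟩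
  · intro S hS
    have hS' := mem_Cset.mp hS
    obtain ⟨hz, hw, hall⟩ := hS'
    have hzw : z ≠ w := fun h => absurd hwz (by rw [h]; exact lt_irrefl w)
    have hzmem : z ∈ S.erase w := Finset.mem_erase.mpr ⟨hzw, hz⟩
    have ham : m0 w S ∈ S.erase w := by
      obtain ⟨a, hamin⟩ := Finset.min_of_nonempty ⟨z, hzmem⟩
      have : m0 w S = a := by unfold m0; rw [hamin]; rfl
      rw [this]
      exact Finset.mem_of_min hamin
    have hbd : ∀ b ∈ S.erase w, m0 w S ≤ b := by
      obtain ⟨a, hamin⟩ := Finset.min_of_nonempty ⟨z, hzmem⟩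
      have : m0 w S = a := by unfold m0; rw [hamin]; rfl
      rw [this]
      exact fun b hb => Finset.min_le_of_eq hb hamin
    have hamem := Finset.mem_erase.mp ham
    rw [Finset.mem_sigma]
    constructor
    · rw [Finset.mem_filter]
      exact ⟨Finset.mem_univ _,
        lt_of_le_of_ne (hall _ hamem.2).1 (Ne.symm hamem.1), (hall _ hamem.2).2⟩
    · rw [mem_Cset]
      exact ⟨hzmem, ham,
        fun b hb => ⟨hbd b hb, (hall b (Finset.mem_erase.mp hb).2).2⟩⟩
  · rintro ⟨m, S'⟩ hx
    rw [Finset.mem_sigma, Finset.mem_filter] at hx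
    obtain ⟨⟨-, hwm, hmz⟩, hS'⟩ := hx
    rw [mem_Cset] at hS'
    obtain ⟨hz, hmS, hall⟩ := hS'
    have hwS' : w ∉ S' := fun h => absurd (hall w h).1 (not_le.mpr hwm)
    have he : (insert w S').erase w = S' := Finset.erase_insert hwS'
    have hm0 : m0 w (insert w S') = m := by
      unfold m0
      rw [he]
      exact min_untop hmS (fun a ha => (hall a ha).1)
    dsimp only
    rw [he, hm0]
  · intro S hS
    have hS' := mem_Cset.mp hS
    dsimp only
    exact Finset.insert_erase hS'.2.1
  · rintro ⟨m, S'⟩ hx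
    rw [Finset.mem_sigma, Finset.mem_filter] at hx
    obtain ⟨⟨-, hwm, hmz⟩, hS'⟩ := hx
    rw [mem_Cset] at hS'
    obtain ⟨hz, hmS, hall⟩ := hS'
    exact (w8_insert hmS hwm (fun a ha => (hall a ha).1)).symm

def Gf (lam : Fin (N+1) → Fin (N+1) → ℝ) (z w : Fin (N+1)) : ℝ :=
  ∑ S ∈ Cset z w, w8 lam S

lemma Gf_zero {lam : Fin (N+1) → Fin (N+1) → ℝ} {z w : Fin (N+1)} (h : z < w) :
    Gf lam z w = 0 := by
  unfold Gf
  rw [Cset_empty h, Finset.sum_empty]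

lemma Gf_self (lam : Fin (N+1) → Fin (N+1) → ℝ) (z : Fin (N+1)) : Gf lam z z = 1 := by
  unfold Gf
  rw [Cset_self, Finset.sum_singleton, w8_single]

lemma Gf_rec {lam : Fin (N+1) → Fin (N+1) → ℝ} (z w : Fin (N+1)) :
    Gf lam z w = (if w = z then 1 else 0)
      + ∑ m ∈ univ.filter (fun m => w < m), Gf lam z m * lam m w := by
  rcases lt_trichotomy w z with h | rfl | h
  · rw [if_neg (ne_of_lt h)]
    unfold Gf
    rw [Cset_decomp h, zero_add,
      ← Finset.sum_filter_add_sum_filter_not (univ.filter (fun m => w < m))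
        (fun m => m ≤ z), Finset.filter_filter]
    have h2 : ∑ m ∈ (univ.filter (fun m => w < m)).filter (fun m => ¬ m ≤ z),
        (∑ S ∈ Cset z m, w8 lam S) * lam m w = 0 := by
      apply Finset.sum_eq_zero
      intro m hm
      rw [Finset.filter_filter, Finset.mem_filter] at hm
      rw [Cset_empty (not_le.mp hm.2.2), Finset.sum_empty, zero_mul]
    rw [h2, add_zero]
    apply Finset.sum_congr rfl
    intro m hm
    rw [mul_comm]
  · rw [if_pos rfl]
    have h2 : ∑ m ∈ univ.filter (fun m => w < m), Gf lam w m * lam m w = 0 := by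
      apply Finset.sum_eq_zero
      intro m hm
      rw [Finset.mem_filter] at hm
      rw [Gf_zero hm.2, zero_mul]
    rw [h2, add_zero, Gf_self]
  · rw [if_neg (ne_of_gt h), Gf_zero h, zero_add]
    symm
    apply Finset.sum_eq_zero
    intro m hm
    rw [Finset.mem_filter] at hm
    rw [Gf_zero (lt_trans h hm.2), zero_mul]

lemma normBasisF_eval (lam : Fin (N+1) → Fin (N+1) → ℝ) (n w : Fin (N+1)) :
    normBasisF (Equiv.refl _) lam n w = (if w = n then 1 else 0) - lam n w := by
  unfold normBasisF indic
  simp only [Equiv.refl_apply]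
  congr 1
  rw [Finset.sum_eq_single w]
  · simp
  · intro i _ hne
    simp [Ne.symm hne]
  · intro h
    exact absurd (Finset.mem_univ w) h

lemma mol_sum_zero (z : Fin (N+1)) : ∑ x, mol z 0 x = 0 := by
  unfold mol indic
  rw [Finset.sum_sub_distrib, Finset.sum_ite_eq' univ z (fun _ => (1:ℝ)),
    Finset.sum_ite_eq' univ 0 (fun _ => (1:ℝ))]
  simp

lemma lam_zero_not_lt {lam : Fin (N+1) → Fin (N+1) → ℝ} (hlam : LamData N lam)
    {n w : Fin (N+1)} (h : ¬ w < n) : lam n w = 0 := hlam.2.1 n w h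

lemma bstar_rec {lam : Fin (N+1) → Fin (N+1) → ℝ} (hlam : LamData N lam)
    {bstar : Fin (N+1) → (Fin (N+1) → ℝ) → ℝ}
    (hco : IsCoordF (Equiv.refl _) lam bstar)
    {z : Fin (N+1)} (hz : z ≠ 0) {w : Fin (N+1)} (hw : w ≠ 0) :
    bstar w (mol z 0) = (if w = z then 1 else 0)
      + ∑ m ∈ univ.filter (fun m => w < m), bstar m (mol z 0) * lam m w := by
  have h := hco (mol z 0) (mol_sum_zero z) w
  have hre : ∀ n ∈ univ.filter (fun n : Fin (N+1) => n ≠ (0 : Fin (N+1))),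
      bstar n (mol z 0) * normBasisF (Equiv.refl _) lam n w
      = (if w = n then bstar n (mol z 0) else 0) - bstar n (mol z 0) * lam n w := by
    intro n _
    rw [normBasisF_eval, mul_sub]
    congr 1
    by_cases hwn : w = n <;> simp [hwn]
  rw [Finset.sum_congr rfl hre, Finset.sum_sub_distrib] at h
  have hA : ∑ n ∈ univ.filter (fun n : Fin (N+1) => n ≠ (0 : Fin (N+1))),
      (if w = n then bstar n (mol z 0) else 0) = bstar w (mol z 0) := by
    rw [Finset.sum_ite_eq]
    rw [if_pos]
    rw [Finset.mem_filter]
    exact ⟨Finset.mem_univ _, hw⟩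
  have hB : ∑ n ∈ univ.filter (fun n : Fin (N+1) => n ≠ (0 : Fin (N+1))),
      bstar n (mol z 0) * lam n w
      = ∑ m ∈ univ.filter (fun m => w < m), bstar m (mol z 0) * lam m w := by
    symm
    apply Finset.sum_subset
    · intro m hm
      rw [Finset.mem_filter] at hm ⊢
      refine ⟨Finset.mem_univ _, ?_⟩
      intro h0
      rw [h0] at hm
      exact absurd hm.2 (Fin.not_lt_zero w)
    · intro m _ hm
      rw [Finset.mem_filter] at hm
      have : ¬ w < m := fun hc => hm ⟨Finset.mem_univ _, hc⟩
      rw [lam_zero_not_lt hlam this, mul_zero]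
  rw [hA, hB] at h
  have hmol : mol z 0 w = (if w = z then 1 else 0) := by
    unfold mol indic
    rw [if_neg hw, sub_zero]
  rw [hmol] at h
  linarith

lemma bstar_eq_Gf {lam : Fin (N+1) → Fin (N+1) → ℝ} (hlam : LamData N lam)
    {bstar : Fin (N+1) → (Fin (N+1) → ℝ) → ℝ}
    (hco : IsCoordF (Equiv.refl _) lam bstar)
    {z : Fin (N+1)} (hz : z ≠ 0) :
    ∀ (k : ℕ) (w : Fin (N+1)), N ≤ w.val + k → w ≠ 0 →
      bstar w (mol z 0) = Gf lam z w := by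
  intro k
  induction k with
  | zero =>
    intro w hwk hw
    have hemp : univ.filter (fun m : Fin (N+1) => w < m) = ∅ := by
      rw [Finset.filter_eq_empty_iff]
      intro m _
      rw [not_lt, Fin.le_def]
      have := m.isLt
      omega
    rw [bstar_rec hlam hco hz hw, Gf_rec z w, hemp, Finset.sum_empty, Finset.sum_empty]
  | succ k ih =>
    intro w hwk hw
    rw [bstar_rec hlam hco hz hw, Gf_rec z w]
    congr 1
    apply Finset.sum_congr rfl
    intro m hm
    rw [Finset.mem_filter] at hm
    have hlt : w.val < m.val := hm.2
    have hm0 : m ≠ 0 :=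
      Fin.pos_iff_ne_zero.mp (lt_of_le_of_lt (Fin.zero_le w) hm.2)
    rw [ih m (by omega) hm0]


end TCS


namespace TCS

theorem statement6 (N : ℕ) (d : Fin (N+1) → Fin (N+1) → ℝ) (hd : IsMetric d)
    (lam : Fin (N+1) → Fin (N+1) → ℝ) (hlam : LamData N lam)
    (bstar : Fin (N+1) → (Fin (N+1) → ℝ) → ℝ)
    (hco : IsCoordF (Equiv.refl _) lam bstar) :
    IsProb (prodProb lam) ∧
    (∀ S : Finset (Fin (N+1) × Fin (N+1)),
      (∀ q ∈ S, q.2 < q.1) → (∀ q ∈ S, ∀ q' ∈ S, q.1 = q'.1 → q.2 = q'.2) →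
      ((∑ T ∈ univ.filter (fun T : Tr N => ∀ q ∈ S, T.1 q.1 = q.2),
          ∏ n ∈ univ.filter (fun n : Fin (N+1) => n ≠ 0 ∧ n ∉ S.image Prod.fst),
            lam n (T.1 n)) = 1 ∧
        probOf (prodProb lam) (fun T => ∀ q ∈ S, T.1 q.1 = q.2) = ∏ q ∈ S, lam q.1 q.2)) ∧
    (∀ z n : Fin (N+1), z ≠ 0 → n ≠ 0 →
      bstar n (mol z 0) =
        ∑ S ∈ univ.filter (fun S : Finset (Fin (N+1)) =>
            z ∈ S ∧ n ∈ S ∧ ∀ a ∈ S, n ≤ a ∧ a ≤ z),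
          probOf (prodProb lam) (fun T => chainInTree S T)) := by
  refine ⟨⟨?_, ?_⟩, ?_, ?_⟩
  · intro T
    unfold prodProb
    exact Finset.prod_nonneg (fun n _ => (hlam.1 n (T.1 n)).1)
  · unfold prodProb
    rw [sum_tr_prod lam]
    exact Finset.prod_eq_one (fun n hn => lam_sum_lt hlam (Finset.mem_filter.mp hn).2)
  · intro S h1S h2S
    exact ⟨part2a hlam S h1S h2S, part2b hlam S h1S h2S⟩
  · intro z n hz hn
    rw [bstar_eq_Gf hlam hco hz N n (by omega) hn]
    unfold Gf
    exact (Finset.sum_congr rfl (fun S _ => probOf_chain hlam S)).symm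

end TCS
end
end
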